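/- Fix n and 1 ≤ P ≤ n−1, and let p(y_S) > 0 for subsets S of {1,…,n} be an exchangeable joint probability (depending only on the multiset of values). Define S_PCV(y_{1:n}; P) = Σ_{p=P+1}^n S_CV(y_{1:n}; p), where S_CV(y_{1:n}; p) = (1/C(n,p)) Σ_{|T|=p} (1/p) Σ_{j∈T} log( p(y_{(T∖{j})^c ∪ {j}}) / p(y_{T^c}) ). Then S_PCV(y_{1:n}; P) = (1/C(n,P)) Σ_{|T|=P} log p(y_{T^c}), the average log marginal likelihood over all training sets of size n−P. -/

import Mathlib

open Finset

/-- Proposition 3 (Supplementary) of Fong & Holmes: for an exchangeable positive joint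
probability `m` on subsets of the observations (depending only on the multiset of
values, with `m ∅ = 1`), the preparatory cross-validation score
`S_PCV(y_{1:n}; P) = Σ_{p=P+1}^n S_CV(y_{1:n}; p)` equals the average log marginal
likelihood over all `C(n,P)` training sets of size `n − P`. -/
theorem stmt5 {Y : Type*} (n : ℕ) (y : Fin n → Y)
    (m : Finset (Fin n) → ℝ)
    (hpos : ∀ S, 0 < m S)
    (hempty : m ∅ = 1)
    (hexch : ∀ S S' : Finset (Fin n), S.val.map y = S'.val.map y → m S = m S')
    (P : ℕ) (hP1 : 1 ≤ P) (hP2 : P ≤ n - 1) :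
    ∑ p ∈ Finset.Icc (P + 1) n, ((n.choose p : ℝ))⁻¹ *
      ∑ T ∈ (Finset.univ : Finset (Fin n)).powersetCard p, (p : ℝ)⁻¹ *
        ∑ j ∈ T, Real.log (m (insert j Tᶜ) / m Tᶜ) =
    ((n.choose P : ℝ))⁻¹ *
      ∑ T ∈ (Finset.univ : Finset (Fin n)).powersetCard P, Real.log (m Tᶜ) := by
  have hn1 : 1 ≤ n := by omega
  have hPn : P + 1 ≤ n := by omega
  set f : ℕ → ℝ := fun p =>
    ((n.choose p : ℝ))⁻¹ * ∑ T ∈ (Finset.univ : Finset (Fin n)).powersetCard p,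
      Real.log (m Tᶜ) with hf
  -- key : each summand equals f (p-1) - f p
  have key : ∀ p, 1 ≤ p → p ≤ n →
      ((n.choose p : ℝ))⁻¹ *
        ∑ T ∈ (Finset.univ : Finset (Fin n)).powersetCard p, (p : ℝ)⁻¹ *
          ∑ j ∈ T, Real.log (m (insert j Tᶜ) / m Tᶜ) = f (p - 1) - f p := by
    intro p hp1 hpn
    obtain ⟨q, rfl⟩ : ∃ q, p = q + 1 := ⟨p - 1, by omega⟩
    simp only [Nat.add_sub_cancel, hf]
    have hswap :
        ∑ T ∈ (Finset.univ : Finset (Fin n)).powersetCard (q+1),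
          ∑ j ∈ T, Real.log (m (insert j Tᶜ))
        = ∑ S ∈ (Finset.univ : Finset (Fin n)).powersetCard q,
            ∑ _j ∈ Sᶜ, Real.log (m Sᶜ) := by
      rw [Finset.sum_sigma', Finset.sum_sigma']
      refine Finset.sum_nbij' (fun x => ⟨x.1.erase x.2, x.2⟩)
        (fun x => ⟨insert x.2 x.1, x.2⟩) ?_ ?_ ?_ ?_ ?_
      · rintro ⟨T, j⟩ hx
        rw [Finset.mem_sigma] at hx ⊢
        obtain ⟨hT, hj⟩ := hx
        rw [Finset.mem_powersetCard_univ] at hT ⊢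
        constructor
        · rw [Finset.card_erase_of_mem hj, hT]; omega
        · simp [Finset.mem_compl]
      · rintro ⟨S, j⟩ hx
        rw [Finset.mem_sigma] at hx ⊢
        obtain ⟨hS, hj⟩ := hx
        rw [Finset.mem_powersetCard_univ] at hS ⊢
        rw [Finset.mem_compl] at hj
        constructor
        · rw [Finset.card_insert_of_notMem hj, hS]
        · exact Finset.mem_insert_self _ _
      · rintro ⟨T, j⟩ hx
        rw [Finset.mem_sigma] at hx
        simp [Finset.insert_erase hx.2]
      · rintro ⟨S, j⟩ hx
        rw [Finset.mem_sigma, Finset.mem_compl] at hx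
        simp [Finset.erase_insert hx.2]
      · rintro ⟨T, j⟩ hx
        rw [Finset.mem_sigma] at hx
        simp [Finset.compl_erase, Finset.insert_erase hx.2]
    have hlog : ∀ T : Finset (Fin n), ∀ j ∈ T,
        Real.log (m (insert j Tᶜ) / m Tᶜ)
          = Real.log (m (insert j Tᶜ)) - Real.log (m Tᶜ) := fun T j _ =>
      Real.log_div (hpos _).ne' (hpos _).ne'
    -- abbreviations
    set A := ∑ S ∈ (Finset.univ : Finset (Fin n)).powersetCard q, Real.log (m Sᶜ) with hA
    set B := ∑ T ∈ (Finset.univ : Finset (Fin n)).powersetCard (q+1), Real.log (m Tᶜ) with hB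
    have hinner :
        ∑ T ∈ (Finset.univ : Finset (Fin n)).powersetCard (q+1), ((q+1 : ℕ) : ℝ)⁻¹ *
          ∑ j ∈ T, Real.log (m (insert j Tᶜ) / m Tᶜ)
        = ((q+1 : ℕ) : ℝ)⁻¹ * (((n - q : ℕ) : ℝ) * A - ((q+1 : ℕ) : ℝ) * B) := by
      rw [← Finset.mul_sum]
      congr 1
      have : ∀ T ∈ (Finset.univ : Finset (Fin n)).powersetCard (q+1),
          ∑ j ∈ T, Real.log (m (insert j Tᶜ) / m Tᶜ)
          = (∑ j ∈ T, Real.log (m (insert j Tᶜ))) - ((q+1 : ℕ) : ℝ) * Real.log (m Tᶜ) := by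
        intro T hT
        rw [Finset.sum_congr rfl (hlog T), Finset.sum_sub_distrib, Finset.sum_const,
          Finset.mem_powersetCard_univ.mp hT, nsmul_eq_mul]
      rw [Finset.sum_congr rfl this, Finset.sum_sub_distrib, hswap]
      simp only [Finset.sum_const, Finset.card_compl, Fintype.card_fin, nsmul_eq_mul]
      rw [Finset.sum_congr rfl
        (fun x hx => by rw [Finset.mem_powersetCard_univ.mp hx] :
          ∀ x ∈ (Finset.univ : Finset (Fin n)).powersetCard q,
            ((n - x.card : ℕ) : ℝ) * Real.log (m xᶜ) = ((n - q : ℕ) : ℝ) * Real.log (m xᶜ)),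
        ← Finset.mul_sum]
      rw [← Finset.mul_sum]
    rw [hinner]
    have h0 : ((n.choose q : ℕ) : ℝ) ≠ 0 :=
      Nat.cast_ne_zero.mpr (Nat.choose_pos (by omega)).ne'
    have h1 : ((n.choose (q+1) : ℕ) : ℝ) ≠ 0 :=
      Nat.cast_ne_zero.mpr (Nat.choose_pos (by omega)).ne'
    have hq : ((q+1 : ℕ) : ℝ) ≠ 0 := Nat.cast_ne_zero.mpr (by omega)
    have hc : ((n.choose (q+1) : ℕ) : ℝ) * ((q+1 : ℕ) : ℝ)
        = ((n.choose q : ℕ) : ℝ) * ((n - q : ℕ) : ℝ) := by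
      exact_mod_cast congrArg (Nat.cast : ℕ → ℝ) (Nat.choose_succ_right_eq n q)
    have hd : ((n - q : ℕ) : ℝ) ≠ 0 := Nat.cast_ne_zero.mpr (by omega)
    have key2 : (((n.choose (q+1) : ℕ)) : ℝ)⁻¹ * ((q+1 : ℕ) : ℝ)⁻¹ * ((n - q : ℕ) : ℝ)
        = (((n.choose q : ℕ)) : ℝ)⁻¹ := by
      rw [← mul_inv, hc, mul_inv, mul_assoc, inv_mul_cancel₀ hd, mul_one]
    have expand : (((n.choose (q+1) : ℕ)) : ℝ)⁻¹ *
          (((q+1 : ℕ) : ℝ)⁻¹ * (((n - q : ℕ) : ℝ) * A - ((q+1 : ℕ) : ℝ) * B))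
        = (((n.choose (q+1) : ℕ)) : ℝ)⁻¹ * ((q+1 : ℕ) : ℝ)⁻¹ * ((n - q : ℕ) : ℝ) * A
          - (((n.choose (q+1) : ℕ)) : ℝ)⁻¹ * B := by
      field_simp
    rw [expand, key2]
  -- telescoping
  have step : ∑ p ∈ Finset.Icc (P + 1) n, ((n.choose p : ℝ))⁻¹ *
      ∑ T ∈ (Finset.univ : Finset (Fin n)).powersetCard p, (p : ℝ)⁻¹ *
        ∑ j ∈ T, Real.log (m (insert j Tᶜ) / m Tᶜ)
      = ∑ p ∈ Finset.Icc (P + 1) n, (f (p - 1) - f p) := by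
    refine Finset.sum_congr rfl fun p hp => ?_
    rw [Finset.mem_Icc] at hp
    exact key p (by omega) hp.2
  rw [step, ← Finset.Ico_add_one_right_eq_Icc, Finset.sum_Ico_eq_sum_range]
  have hrange : ∀ k, f (P + 1 + k - 1) - f (P + 1 + k) = f (P + k) - f (P + (k + 1)) := by
    intro k
    congr 2 <;> omega
  rw [Finset.sum_congr rfl (fun k _ => hrange k)]
  have := Finset.sum_range_sub' (fun i => f (P + i)) (n + 1 - (P + 1))
  rw [this]
  have hfn : f (P + (n + 1 - (P + 1))) = 0 := by
    have : P + (n + 1 - (P + 1)) = n := by omega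
    rw [this]
    have hps : (Finset.univ : Finset (Fin n)).powersetCard n = {Finset.univ} := by
      simpa using Finset.powersetCard_self (Finset.univ : Finset (Fin n))
    simp [hf, hps, hempty]
  rw [hfn, add_zero, sub_zero, hf]
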